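/- (Duality of constituents) Let C be a QC code with CRT decomposition C ≅ (⊕_{i=1}^n C_i) ⊕ (⊕_{t=1}^p (C'_t ⊕ C''_t)), where the C_i correspond to self-reciprocal irreducible factors g_i of x^m−1 and (C'_t, C''_t) to reciprocal pairs (h_t, h_t*). Then the Euclidean dual C^⊥ decomposes as (⊕_i C_i^{⊥_G}) ⊕ (⊕_t ((C''_t)^{⊥_e} ⊕ (C'_t)^{⊥_e})), where ⊥_G denotes the Hermitian dual on G_i^ℓ (Euclidean when G_i = F_q) and ⊥_e the Euclidean dual. -/

import Mathlib

set_option maxHeartbeats 1000000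

open Polynomial

/-- The polynomial of a length-`m` vector. -/
noncomputable def toPoly {F : Type*} [Field F] {m : ℕ} (v : Fin m → F) : Polynomial F :=
  ∑ k : Fin m, C (v k) * X ^ (k : ℕ)

/-- The natural reduction map `F[x]/⟨f₁⟩ → F[x]/⟨f₂⟩` when `f₂ ∣ f₁`. -/
noncomputable def projMod {F : Type*} [Field F] (f₁ f₂ : Polynomial F) (h : f₂ ∣ f₁) :
    AdjoinRoot f₁ →+* AdjoinRoot f₂ :=
  AdjoinRoot.lift (AdjoinRoot.of f₂) (AdjoinRoot.root f₂) (by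
    have h0 : (AdjoinRoot.mk f₂) f₁ = 0 := AdjoinRoot.mk_eq_zero.mpr h
    rwa [← AdjoinRoot.aeval_eq, Polynomial.aeval_def] at h0)

/-- A codeword array, viewed as an element of `R^ℓ` via column polynomials. -/
noncomputable def toR {F : Type*} [Field F] {m ℓ : ℕ} (c : Fin m → Fin ℓ → F) :
    Fin ℓ → AdjoinRoot (X ^ m - C 1 : Polynomial F) :=
  fun j => AdjoinRoot.mk _ (toPoly fun i => c i j)

/-- The set of codeword arrays of a QC code `Cs ⊆ R^ℓ`. -/
noncomputable def arrSet {F : Type*} [Field F] {m ℓ : ℕ}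
    (Cs : Submodule (AdjoinRoot (X ^ m - C 1 : Polynomial F))
      (Fin ℓ → AdjoinRoot (X ^ m - C 1 : Polynomial F))) : Set (Fin m → Fin ℓ → F) :=
  {c | toR c ∈ Cs}

/-- The Euclidean dual of a QC code, at the level of `m × ℓ` arrays over `F`. -/
noncomputable def dualArr {F : Type*} [Field F] {m ℓ : ℕ}
    (Cs : Submodule (AdjoinRoot (X ^ m - C 1 : Polynomial F))
      (Fin ℓ → AdjoinRoot (X ^ m - C 1 : Polynomial F))) : Set (Fin m → Fin ℓ → F) :=
  {d | ∀ c ∈ arrSet Cs, ∑ i, ∑ j, c i j * d i j = 0}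

/-- The constituent of a set of codeword arrays at an irreducible factor `f₂` of
`x^m − 1`: the image of the code in `(F[x]/⟨f₂⟩)^ℓ` under reduction mod `f₂`. -/
noncomputable def constSet {F : Type*} [Field F] {m ℓ : ℕ} (f₂ : Polynomial F)
    (h : f₂ ∣ X ^ m - C 1) (S : Set (Fin m → Fin ℓ → F)) :
    Set (Fin ℓ → AdjoinRoot f₂) :=
  (fun c => fun j => projMod (X ^ m - C 1) f₂ h (toR c j)) '' S

namespace QCAux
variable {F : Type*} [Field F]

theorem homExt {f : Polynomial F} {S : Type*} [CommRing S] {φ₁ φ₂ : AdjoinRoot f →+* S}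
    (h1 : ∀ x : F, φ₁ (AdjoinRoot.of f x) = φ₂ (AdjoinRoot.of f x))
    (h2 : φ₁ (AdjoinRoot.root f) = φ₂ (AdjoinRoot.root f)) : φ₁ = φ₂ := by
  refine RingHom.ext fun u => ?_
  obtain ⟨P, rfl⟩ := AdjoinRoot.mk_surjective u
  have key : ∀ (φ : AdjoinRoot f →+* S), φ (AdjoinRoot.mk f P)
      = P.eval₂ (φ.comp (AdjoinRoot.of f)) (φ (AdjoinRoot.root f)) := by
    intro φ
    rw [← AdjoinRoot.aeval_eq, Polynomial.aeval_def, ← AdjoinRoot.algebraMap_eq,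
      Polynomial.hom_eval₂]
  have hcomp : φ₁.comp (AdjoinRoot.of f) = φ₂.comp (AdjoinRoot.of f) := RingHom.ext h1
  rw [key, key, hcomp, h2]

theorem projMod_mk {f₁ f₂ : Polynomial F} (h : f₂ ∣ f₁) (P : Polynomial F) :
    projMod f₁ f₂ h (AdjoinRoot.mk f₁ P) = AdjoinRoot.mk f₂ P := by
  rw [projMod]; erw [AdjoinRoot.lift_mk]; rw [← AdjoinRoot.algebraMap_eq, ← Polynomial.aeval_def,
    AdjoinRoot.aeval_eq]

theorem projMod_of {f₁ f₂ : Polynomial F} (h : f₂ ∣ f₁) (x : F) :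
    projMod f₁ f₂ h (AdjoinRoot.of f₁ x) = AdjoinRoot.of f₂ x := by
  rw [projMod]; exact AdjoinRoot.lift_of _

theorem projMod_root {f₁ f₂ : Polynomial F} (h : f₂ ∣ f₁) :
    projMod f₁ f₂ h (AdjoinRoot.root f₁) = AdjoinRoot.root f₂ := by
  rw [projMod]; exact AdjoinRoot.lift_root _

theorem projMod_surjective {f₁ f₂ : Polynomial F} (h : f₂ ∣ f₁) :
    Function.Surjective (projMod f₁ f₂ h) := by
  intro u
  obtain ⟨P, rfl⟩ := AdjoinRoot.mk_surjective u
  exact ⟨AdjoinRoot.mk _ P, projMod_mk h P⟩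

variable {m : ℕ}

theorem mk_X_pow_m : AdjoinRoot.mk (X ^ m - C 1 : Polynomial F) (X ^ m) = 1 := by
  have h0 : AdjoinRoot.mk (X ^ m - C 1 : Polynomial F) (X ^ m - C 1) = 0 := AdjoinRoot.mk_self
  rw [map_sub, sub_eq_zero] at h0
  rw [h0, Polynomial.C_1, map_one]

theorem root_pow_m : (AdjoinRoot.root (X ^ m - C 1 : Polynomial F)) ^ m = 1 := by
  rw [← AdjoinRoot.mk_X, ← map_pow, mk_X_pow_m]

theorem root_mul_pow_pred (hm : 0 < m) :
    (AdjoinRoot.root (X ^ m - C 1 : Polynomial F)) ^ (m - 1)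
      * AdjoinRoot.root (X ^ m - C 1 : Polynomial F) = 1 := by
  rw [← pow_succ, Nat.sub_add_cancel hm, root_pow_m]

/-- The conjugation `x ↦ x^{m-1} = x⁻¹` on `R = F[x]/(x^m-1)`. -/
noncomputable def conjR (F : Type*) [Field F] (m : ℕ) :
    AdjoinRoot (X ^ m - C 1 : Polynomial F) →+* AdjoinRoot (X ^ m - C 1 : Polynomial F) :=
  AdjoinRoot.lift (AdjoinRoot.of _) ((AdjoinRoot.root _) ^ (m - 1)) (by
    have h1 : ((AdjoinRoot.root (X ^ m - C 1 : Polynomial F)) ^ (m - 1)) ^ m = 1 := by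
      rw [← pow_mul, mul_comm, pow_mul, root_pow_m, one_pow]
    rw [Polynomial.eval₂_sub, Polynomial.eval₂_pow, Polynomial.eval₂_C, Polynomial.eval₂_X, h1]
    simp)

theorem conjR_of (x : F) : conjR F m (AdjoinRoot.of _ x) = AdjoinRoot.of _ x := by
  rw [conjR]; exact AdjoinRoot.lift_of _

theorem conjR_root : conjR F m (AdjoinRoot.root _) = (AdjoinRoot.root _) ^ (m - 1) := by
  rw [conjR]; exact AdjoinRoot.lift_root _

theorem conjR_conjR (hm : 0 < m) (u : AdjoinRoot (X ^ m - C 1 : Polynomial F)) :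
    conjR F m (conjR F m u) = u := by
  have key : (conjR F m).comp (conjR F m) = RingHom.id _ := by
    apply homExt
    · intro x; simp [conjR_of]
    · have h1 : conjR F m (conjR F m (AdjoinRoot.root _))
          = ((AdjoinRoot.root (X ^ m - C 1 : Polynomial F)) ^ (m-1)) ^ (m-1) := by
        rw [conjR_root, map_pow, conjR_root]
      have h2 : ((AdjoinRoot.root (X ^ m - C 1 : Polynomial F)) ^ (m-1)) ^ (m-1)
          * ((AdjoinRoot.root (X ^ m - C 1 : Polynomial F)) ^ (m-1)) = 1 := by
        rw [← pow_succ, Nat.sub_add_cancel hm, ← pow_mul, mul_comm, pow_mul, root_pow_m,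
          one_pow]
      have h3 := root_mul_pow_pred (F := F) hm
      simp only [RingHom.coe_comp, Function.comp_apply, RingHom.id_apply, h1]
      calc ((AdjoinRoot.root (X ^ m - C 1 : Polynomial F)) ^ (m-1)) ^ (m-1)
          = ((AdjoinRoot.root (X ^ m - C 1 : Polynomial F)) ^ (m-1)) ^ (m-1)
            * (((AdjoinRoot.root (X ^ m - C 1 : Polynomial F)) ^ (m-1))
              * AdjoinRoot.root (X ^ m - C 1 : Polynomial F)) := by rw [h3, mul_one]
        _ = (((AdjoinRoot.root (X ^ m - C 1 : Polynomial F)) ^ (m-1)) ^ (m-1)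
            * ((AdjoinRoot.root (X ^ m - C 1 : Polynomial F)) ^ (m-1)))
              * AdjoinRoot.root (X ^ m - C 1 : Polynomial F) := by ring
        _ = AdjoinRoot.root (X ^ m - C 1 : Polynomial F) := by rw [h2, one_mul]
  exact DFunLike.congr_fun key u

theorem modfact (hm : 0 < m) {i k : ℕ} (hi : i < m) (hk : k < m) :
    ((i + (m-1)*k) % m = 0) ↔ i = k := by
  constructor
  · intro hmod
    obtain ⟨c, hc⟩ := Nat.dvd_of_mod_eq_zero hmod
    have h1 : (m-1)*k = m*k - k := by rw [Nat.sub_one_mul]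
    have h2 : k ≤ m*k := Nat.le_mul_of_pos_left k hm
    have h3 : (i : ℤ) + m*k = m*c + k := by
      have : i + m*k = m*c + k := by omega
      exact_mod_cast congrArg (Nat.cast : ℕ → ℤ) this
    have h4 : (m:ℤ) ∣ (i - k : ℤ) := ⟨c - k, by linarith⟩
    have h5 : (i - k : ℤ) = 0 := Int.eq_zero_of_abs_lt_dvd h4 (by
      rw [abs_lt]; constructor <;> [linarith; linarith])
    omega
  · rintro rfl
    have h1 : i + (m-1)*i = m*i := by
      have : (m-1)*i = m*i - i := by rw [Nat.sub_one_mul]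
      have h2 : i ≤ m*i := Nat.le_mul_of_pos_left i hm
      omega
    rw [h1, Nat.mul_mod_right]

/-- The "constant coefficient of the canonical representative" functional on `R`. -/
noncomputable def epsR (F : Type*) [Field F] (m : ℕ) (hm : 0 < m) :
    AdjoinRoot (X ^ m - C 1 : Polynomial F) →ₗ[F] F :=
  (Polynomial.lcoeff F 0).comp
    (AdjoinRoot.modByMonicHom (monic_X_pow_sub_C (1 : F) hm.ne'))

theorem epsR_mk_of_degree_lt (hm : 0 < m) {P : Polynomial F} (hP : P.degree < m) :
    epsR F m hm (AdjoinRoot.mk _ P) = P.coeff 0 := by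
  rw [epsR, LinearMap.comp_apply, AdjoinRoot.modByMonicHom_mk]
  have : P %ₘ (X ^ m - C 1) = P := by
    rw [Polynomial.modByMonic_eq_self_iff (monic_X_pow_sub_C (1 : F) hm.ne')]
    rwa [degree_X_pow_sub_C hm]
  rw [this]; rfl

theorem epsR_root_pow (hm : 0 < m) (k : ℕ) :
    epsR F m hm ((AdjoinRoot.root (X ^ m - C 1 : Polynomial F)) ^ k)
      = if k % m = 0 then 1 else 0 := by
  have h1 : (AdjoinRoot.root (X ^ m - C 1 : Polynomial F)) ^ k
      = AdjoinRoot.mk _ (X ^ (k % m)) := by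
    conv_lhs => rw [← Nat.div_add_mod k m]
    rw [pow_add, pow_mul, root_pow_m, one_pow, one_mul, ← AdjoinRoot.mk_X, ← map_pow]
  rw [h1, epsR_mk_of_degree_lt hm (by
    rw [degree_X_pow]
    exact_mod_cast Nat.cast_lt.mpr (Nat.mod_lt k hm))]
  rw [Polynomial.coeff_X_pow]
  by_cases h : k % m = 0 <;> simp [h, eq_comm]

theorem mk_toPoly (v : Fin m → F) :
    AdjoinRoot.mk (X ^ m - C 1 : Polynomial F) (toPoly v)
      = ∑ i : Fin m, v i • (AdjoinRoot.root (X ^ m - C 1 : Polynomial F)) ^ (i : ℕ) := by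
  rw [toPoly, map_sum]
  refine Finset.sum_congr rfl fun i _ => ?_
  rw [map_mul, AdjoinRoot.mk_C, map_pow, AdjoinRoot.mk_X, Algebra.smul_def,
    AdjoinRoot.algebraMap_eq]

theorem conjR_mk_toPoly (v : Fin m → F) :
    conjR F m (AdjoinRoot.mk (X ^ m - C 1 : Polynomial F) (toPoly v))
      = ∑ k : Fin m, v k • (AdjoinRoot.root (X ^ m - C 1 : Polynomial F))
          ^ ((m - 1) * (k : ℕ)) := by
  rw [mk_toPoly, map_sum]
  refine Finset.sum_congr rfl fun k _ => ?_
  rw [Algebra.smul_def, AdjoinRoot.algebraMap_eq, map_mul, conjR_of, map_pow, conjR_root,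
    ← pow_mul, Algebra.smul_def, AdjoinRoot.algebraMap_eq]

/-- The key pairing identity. -/
theorem pairing_eq (hm : 0 < m) (a b : Fin m → F) :
    ∑ i, a i * b i
      = epsR F m hm (AdjoinRoot.mk _ (toPoly a) * conjR F m (AdjoinRoot.mk _ (toPoly b))) := by
  rw [mk_toPoly, conjR_mk_toPoly, Finset.sum_mul_sum]
  have expand : ∀ (i k : Fin m),
      (a i • (AdjoinRoot.root (X ^ m - C 1 : Polynomial F)) ^ (i:ℕ))
        * (b k • (AdjoinRoot.root (X ^ m - C 1 : Polynomial F)) ^ ((m-1)*(k:ℕ)))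
      = (a i * b k) • (AdjoinRoot.root (X ^ m - C 1 : Polynomial F)) ^ ((i:ℕ) + (m-1)*(k:ℕ)) := by
    intro i k
    rw [smul_mul_smul_comm, pow_add]
  simp only [expand, map_sum, map_smul, smul_eq_mul]
  have step : ∀ i k : Fin m,
      a i * b k * epsR F m hm ((AdjoinRoot.root (X ^ m - C 1 : Polynomial F))
          ^ ((i:ℕ) + (m-1)*(k:ℕ)))
      = a i * b k * (if k = i then (1:F) else 0) := by
    intro i k
    rw [epsR_root_pow hm]
    congr 1
    have hiff := modfact (m := m) hm i.isLt k.isLt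
    have hiff2 : (((i:ℕ) + (m-1)*(k:ℕ)) % m = 0) ↔ (k = i) := by
      rw [hiff]; exact ⟨fun h => Fin.ext h.symm, fun h => congrArg Fin.val h.symm⟩
    simp [hiff2]
  rw [Finset.sum_congr rfl (fun i _ => Finset.sum_congr rfl (fun k _ => step i k))]
  refine Finset.sum_congr rfl fun i _ => ?_
  simp only [mul_ite, mul_one, mul_zero]
  rw [Finset.sum_ite_eq' Finset.univ i (fun k => a i * b k)]
  simp

/-- surjectivity of `v ↦ mk (toPoly v)`. -/
theorem mk_toPoly_surjective (hm : 0 < m) (u : AdjoinRoot (X ^ m - C 1 : Polynomial F)) :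
    ∃ v : Fin m → F, AdjoinRoot.mk _ (toPoly v) = u := by
  set Mo := monic_X_pow_sub_C (1 : F) hm.ne'
  set Q := AdjoinRoot.modByMonicHom Mo u with hQ
  have hdeg : Q.natDegree < m := by
    have h1 : Q.degree < (X ^ m - C 1 : Polynomial F).degree := by
      obtain ⟨P, rfl⟩ := AdjoinRoot.mk_surjective u
      rw [hQ, AdjoinRoot.modByMonicHom_mk]
      exact Polynomial.degree_modByMonic_lt P Mo
    rw [degree_X_pow_sub_C hm] at h1
    rcases eq_or_ne Q 0 with h | h
    · simpa [h] using hm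
    · exact_mod_cast (Polynomial.degree_eq_natDegree h ▸ h1)
  refine ⟨fun i => Q.coeff i, ?_⟩
  have hQsum : toPoly (fun i : Fin m => Q.coeff i) = Q := by
    conv_rhs => rw [Polynomial.as_sum_range' Q m hdeg]
    rw [toPoly, Finset.sum_range fun i => (monomial i) (Q.coeff i)]
    exact Finset.sum_congr rfl fun i _ => by rw [Polynomial.C_mul_X_pow_eq_monomial]
  rw [hQsum, hQ]
  exact AdjoinRoot.mk_leftInverse Mo u

theorem eps_nondeg (hm : 0 < m) (u : AdjoinRoot (X ^ m - C 1 : Polynomial F))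
    (h : ∀ v : Fin m → F, epsR F m hm (AdjoinRoot.mk _ (toPoly v) * u) = 0) : u = 0 := by
  obtain ⟨b, hb⟩ := mk_toPoly_surjective hm (conjR F m u)
  have hbu : conjR F m (AdjoinRoot.mk _ (toPoly b)) = u := by
    rw [hb, conjR_conjR hm]
  have hzero : ∀ i, b i = 0 := by
    intro i
    have := h (Pi.single i 1)
    rw [← hbu, ← pairing_eq hm (Pi.single i 1) b] at this
    simpa [Pi.single_apply] using this
  have : b = 0 := funext hzero
  rw [← hbu, this]
  have : toPoly (0 : Fin m → F) = 0 := by simp [toPoly]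
  rw [this, map_zero, map_zero]

theorem toR_surjective (hm : 0 < m) {ℓ : ℕ}
    (v : Fin ℓ → AdjoinRoot (X ^ m - C 1 : Polynomial F)) :
    ∃ c : Fin m → Fin ℓ → F, toR c = v := by
  have hch : ∀ j, ∃ w : Fin m → F, AdjoinRoot.mk _ (toPoly w) = v j :=
    fun j => mk_toPoly_surjective hm (v j)
  choose w hw using hch
  exact ⟨fun i j => w j i, funext fun j => hw j⟩

theorem sum_pairing (hm : 0 < m) {ℓ : ℕ} (c d : Fin m → Fin ℓ → F) :
    ∑ i, ∑ j, c i j * d i j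
      = epsR F m hm (∑ j, toR c j * conjR F m (toR d j)) := by
  rw [Finset.sum_comm, map_sum]
  exact Finset.sum_congr rfl fun j _ => pairing_eq hm (fun i => c i j) (fun i => d i j)

theorem dualArr_iff (hm : 0 < m) {ℓ : ℕ}
    (Cs : Submodule (AdjoinRoot (X ^ m - C 1 : Polynomial F))
      (Fin ℓ → AdjoinRoot (X ^ m - C 1 : Polynomial F))) (d : Fin m → Fin ℓ → F) :
    d ∈ dualArr Cs ↔ ∀ cvec ∈ Cs, ∑ j, cvec j * conjR F m (toR d j) = 0 := by
  constructor
  · intro hmem cvec hc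
    apply eps_nondeg hm
    intro v
    set s := AdjoinRoot.mk (X ^ m - C 1 : Polynomial F) (toPoly v) with hs
    obtain ⟨c, hcr⟩ := toR_surjective hm (s • cvec)
    have harr : c ∈ arrSet Cs := by
      show toR c ∈ Cs
      rw [hcr]; exact Cs.smul_mem s hc
    have h0 := hmem c harr
    rw [sum_pairing hm c d, hcr] at h0
    rw [show s * ∑ j, cvec j * conjR F m (toR d j)
        = ∑ j, (s • cvec) j * conjR F m (toR d j) by
      rw [Finset.mul_sum]
      exact Finset.sum_congr rfl fun j _ => by
        rw [Pi.smul_apply, smul_eq_mul, mul_assoc]]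
    exact h0
  · intro hvec c hc
    rw [sum_pairing hm c d, hvec (toR c) hc, map_zero]

theorem master {ℓ : ℕ} (hm : 0 < m)
    (hsq : Squarefree (X ^ m - C 1 : Polynomial F))
    (Cs : Submodule (AdjoinRoot (X ^ m - C 1 : Polynomial F))
      (Fin ℓ → AdjoinRoot (X ^ m - C 1 : Polynomial F)))
    {ι : Type*} [Fintype ι] [DecidableEq ι] (W : ι → Polynomial F)
    (hWd : ∀ b, W b ∣ (X ^ m - C 1 : Polynomial F))
    (hprod : Associated (∏ b, W b) (X ^ m - C 1 : Polynomial F))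
    (hWnu : ∀ b, ¬ IsUnit (W b))
    (hunit : ∀ b (u : AdjoinRoot (W b)), u ≠ 0 → IsUnit u)
    (a₀ a₁ : ι)
    (τ : AdjoinRoot (W a₁) →+* AdjoinRoot (W a₀))
    (τ' : AdjoinRoot (W a₀) →+* AdjoinRoot (W a₁))
    (hτ : (projMod _ (W a₀) (hWd a₀)).comp (conjR F m)
      = τ.comp (projMod _ (W a₁) (hWd a₁)))
    (hτ' : (projMod _ (W a₁) (hWd a₁)).comp (conjR F m)
      = τ'.comp (projMod _ (W a₀) (hWd a₀)))
    (hother : ∀ b, b ≠ a₀ → b ≠ a₁ →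
      ∃ (c : ι) (ψ : AdjoinRoot (W c) →+* AdjoinRoot (W b)), c ≠ a₀ ∧
        (projMod _ (W b) (hWd b)).comp (conjR F m) = ψ.comp (projMod _ (W c) (hWd c))) :
    constSet (W a₀) (hWd a₀) (dualArr Cs)
      = {d' : Fin ℓ → AdjoinRoot (W a₀) |
          ∀ cc ∈ constSet (W a₁) (hWd a₁) (arrSet Cs), ∑ j, τ (cc j) * d' j = 0} := by
  classical
  have hM0 : (X ^ m - C 1 : Polynomial F) ≠ 0 := (monic_X_pow_sub_C (1 : F) hm.ne').ne_zero
  -- pairwise coprimality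
  have hcop : ∀ b c : ι, b ≠ c → IsCoprime (W b) (W c) := by
    intro b c hbc
    rw [← EuclideanDomain.gcd_isUnit_iff]
    apply hsq
    have h1 : EuclideanDomain.gcd (W b) (W c) * EuclideanDomain.gcd (W b) (W c)
        ∣ W b * W c :=
      mul_dvd_mul (EuclideanDomain.gcd_dvd_left _ _) (EuclideanDomain.gcd_dvd_right _ _)
    refine h1.trans (dvd_trans ?_ hprod.dvd)
    rw [← Finset.prod_pair hbc]
    exact Finset.prod_dvd_prod_of_subset _ _ W (Finset.subset_univ _)
  have hnotdvd : ∀ a : ι, ¬ (W a ∣ ∏ b ∈ Finset.univ.erase a, W b) := by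
    intro a hdvd
    refine hWnu a (hsq _ ?_)
    have h1 : W a * W a ∣ W a * ∏ b ∈ Finset.univ.erase a, W b :=
      mul_dvd_mul_left _ hdvd
    rw [Finset.mul_prod_erase Finset.univ W (Finset.mem_univ a)] at h1
    exact h1.trans hprod.dvd
  have crt_inj : ∀ u : AdjoinRoot (X ^ m - C 1 : Polynomial F),
      (∀ b, projMod _ (W b) (hWd b) u = 0) → u = 0 := by
    intro u hu
    obtain ⟨P, rfl⟩ := AdjoinRoot.mk_surjective u
    have hdvd : ∀ b, W b ∣ P := by
      intro b
      have := hu b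
      rw [projMod_mk] at this
      exact AdjoinRoot.mk_eq_zero.mp this
    have hProd : (∏ b, W b) ∣ P :=
      Finset.prod_dvd_of_coprime
        (fun b _ c _ hbc => hcop b c hbc) (fun b _ => hdvd b)
    exact AdjoinRoot.mk_eq_zero.mpr ((hprod.symm.dvd).trans hProd)
  -- the inverse pair
  have ττ' : ∀ y, τ' (τ y) = y := by
    intro y
    obtain ⟨u, rfl⟩ := projMod_surjective (hWd a₁) y
    have h1 : τ (projMod _ (W a₁) (hWd a₁) u) = projMod _ (W a₀) (hWd a₀) (conjR F m u) :=
      (DFunLike.congr_fun hτ u).symm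
    rw [h1]
    have h2 : τ' (projMod _ (W a₀) (hWd a₀) (conjR F m u))
        = projMod _ (W a₁) (hWd a₁) (conjR F m (conjR F m u)) :=
      (DFunLike.congr_fun hτ' (conjR F m u)).symm
    rw [h2, conjR_conjR hm]
  ext d'
  constructor
  · rintro ⟨darr, hdarr, rfl⟩
    rintro cc ⟨carr, hcarr, rfl⟩
    have hdv : ∑ j, toR carr j * conjR F m (toR darr j) = 0 :=
      (dualArr_iff hm Cs darr).mp hdarr (toR carr) hcarr
    have hdv2 : ∑ j, conjR F m (toR carr j) * toR darr j = 0 := by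
      have := congrArg (conjR F m) hdv
      rw [map_sum, map_zero] at this
      rw [← this]
      exact Finset.sum_congr rfl fun j _ => by
        rw [map_mul, conjR_conjR hm]
    have := congrArg (projMod _ (W a₀) (hWd a₀)) hdv2
    rw [map_sum, map_zero] at this
    rw [← this]
    exact Finset.sum_congr rfl fun j _ => by
      rw [map_mul]
      congr 1
      exact (DFunLike.congr_fun hτ (toR carr j)).symm
  · intro hd'
    set E := AdjoinRoot.mk (X ^ m - C 1 : Polynomial F) (∏ b ∈ Finset.univ.erase a₀, W b)
      with hE
    have hEb : ∀ b, b ≠ a₀ → projMod _ (W b) (hWd b) E = 0 := by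
      intro b hb
      rw [hE, projMod_mk, AdjoinRoot.mk_eq_zero]
      exact Finset.dvd_prod_of_mem W (Finset.mem_erase.mpr ⟨hb, Finset.mem_univ b⟩)
    have hEa : projMod _ (W a₀) (hWd a₀) E ≠ 0 := by
      rw [hE, projMod_mk]
      exact fun hc => hnotdvd a₀ (AdjoinRoot.mk_eq_zero.mp hc)
    obtain ⟨v, hv⟩ := hunit a₀ _ hEa
    have hz : ∀ j, ∃ z : AdjoinRoot (X ^ m - C 1 : Polynomial F),
        projMod _ (W a₀) (hWd a₀) z = ↑v⁻¹ * d' j :=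
      fun j => projMod_surjective (hWd a₀) _
    choose z hzs using hz
    obtain ⟨darr, hdarr⟩ := toR_surjective hm (fun j => E * z j)
    have hproj : ∀ j, projMod _ (W a₀) (hWd a₀) (toR darr j) = d' j := by
      intro j
      rw [hdarr, map_mul, hzs j, ← hv, Units.mul_inv_cancel_left]
    have hmem : darr ∈ dualArr Cs := by
      rw [dualArr_iff hm]
      intro cvec hc
      apply crt_inj
      intro b
      rw [map_sum]
      by_cases hb1 : a₁ = b
      · subst hb1
        obtain ⟨carr, hcr⟩ := toR_surjective hm cvec
        have hcarr : carr ∈ arrSet Cs := by show toR carr ∈ Cs; rw [hcr]; exact hc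
        have hcc : (fun j => projMod _ (W a₁) (hWd a₁) (toR carr j))
            ∈ constSet (W a₁) (hWd a₁) (arrSet Cs) := ⟨carr, hcarr, rfl⟩
        have h0 := hd' _ hcc
        have h0' := congrArg τ' h0
        rw [map_sum, map_zero] at h0'
        rw [← h0']
        refine Finset.sum_congr rfl fun j _ => ?_
        have e1 : τ' (τ (projMod _ (W a₁) (hWd a₁) (toR carr j)) * d' j)
            = projMod _ (W a₁) (hWd a₁) (toR carr j) * τ' (d' j) := by
          rw [RingHom.map_mul, ττ']
        rw [map_mul, e1, hcr]
        congr 1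
        have h3 : projMod _ (W a₁) (hWd a₁) (conjR F m (toR darr j))
            = τ' (projMod _ (W a₀) (hWd a₀) (toR darr j)) :=
          DFunLike.congr_fun hτ' (toR darr j)
        rw [h3, hproj j]
      · have hzero : ∀ j, projMod _ (W b) (hWd b) (conjR F m (toR darr j)) = 0 := by
          intro j
          by_cases hb0 : b = a₀
          · subst hb0
            have h3 : projMod _ (W b) (hWd b) (conjR F m (toR darr j))
                = τ (projMod _ (W a₁) (hWd a₁) (toR darr j)) :=
              DFunLike.congr_fun hτ (toR darr j)
            rw [h3, hdarr, map_mul, hEb a₁ hb1, zero_mul, map_zero]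
          · obtain ⟨c, ψ, hc0, heq⟩ := hother b hb0 (fun h => hb1 h.symm)
            have h3 : projMod _ (W b) (hWd b) (conjR F m (toR darr j))
                = ψ (projMod _ (W c) (hWd c) (toR darr j)) :=
              DFunLike.congr_fun heq (toR darr j)
            rw [h3, hdarr, map_mul, hEb c hc0, zero_mul, map_zero]
        refine Finset.sum_eq_zero fun j _ => ?_
        rw [map_mul, hzero j, mul_zero]
    exact ⟨darr, hmem, funext hproj⟩

theorem root_pow_m_of_dvd {f : Polynomial F} (hfd : f ∣ (X ^ m - C 1 : Polynomial F)) :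
    (AdjoinRoot.root f) ^ m = 1 := by
  have h0 : AdjoinRoot.mk f (X ^ m - C 1) = 0 := AdjoinRoot.mk_eq_zero.mpr hfd
  rw [map_sub, sub_eq_zero] at h0
  rw [← AdjoinRoot.mk_X, ← map_pow, h0, Polynomial.C_1, map_one]

theorem root_pred_mul {f : Polynomial F} (hm : 0 < m)
    (hfd : f ∣ (X ^ m - C 1 : Polynomial F)) :
    (AdjoinRoot.root f) ^ (m - 1) * AdjoinRoot.root f = 1 := by
  rw [← pow_succ, Nat.sub_add_cancel hm, root_pow_m_of_dvd hfd]

/-- `Invertible` structure on `root f` with explicit inverse `root f ^ (m-1)`. -/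
noncomputable def invRoot (hm : 0 < m) {f : Polynomial F}
    (hfd : f ∣ (X ^ m - C 1 : Polynomial F)) : Invertible (AdjoinRoot.root f) :=
  ⟨(AdjoinRoot.root f) ^ (m - 1), root_pred_mul hm hfd,
    by rw [mul_comm]; exact root_pred_mul hm hfd⟩

/-- condition for `tauT f f'` when a generalized reverse-root condition holds -/
theorem tau_cond_of_rev (hm : 0 < m) {f f' : Polynomial F}
    (hf'd : f' ∣ (X ^ m - C 1 : Polynomial F))
    (hrev : Polynomial.eval₂ (AdjoinRoot.of f') (AdjoinRoot.root f') f.reverse = 0) :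
    Polynomial.eval₂ (AdjoinRoot.of f') ((AdjoinRoot.root f') ^ (m - 1)) f = 0 := by
  letI := invRoot hm hf'd
  have h2 : Polynomial.eval₂ (AdjoinRoot.of f') (⅟(⅟(AdjoinRoot.root f'))) f.reverse = 0 := by
    rw [invOf_invOf]; exact hrev
  have h3 := (Polynomial.eval₂_reverse_eq_zero_iff (AdjoinRoot.of f')
    (⅟(AdjoinRoot.root f')) f).mp h2
  exact h3

/-- condition for `tauT f.reverse`-type maps -/
theorem tau_cond_rev (hm : 0 < m) {f : Polynomial F}
    (hfd : f ∣ (X ^ m - C 1 : Polynomial F)) :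
    Polynomial.eval₂ (AdjoinRoot.of f) ((AdjoinRoot.root f) ^ (m - 1)) f.reverse = 0 := by
  letI := invRoot hm hfd
  exact (Polynomial.eval₂_reverse_eq_zero_iff (AdjoinRoot.of f)
    (AdjoinRoot.root f) f).mpr (AdjoinRoot.eval₂_root f)

/-- The transfer map `F[x]/(f) → F[x]/(f')` sending `root f ↦ (root f')⁻¹`. -/
noncomputable def tauT (f f' : Polynomial F)
    (h : Polynomial.eval₂ (AdjoinRoot.of f') ((AdjoinRoot.root f') ^ (m - 1)) f = 0) :
    AdjoinRoot f →+* AdjoinRoot f' :=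
  AdjoinRoot.lift (AdjoinRoot.of f') ((AdjoinRoot.root f') ^ (m - 1)) h

theorem tauT_of {f f' : Polynomial F} (h) (x : F) :
    tauT (m := m) f f' h (AdjoinRoot.of f x) = AdjoinRoot.of f' x := by
  rw [tauT]; exact AdjoinRoot.lift_of _

theorem tauT_root {f f' : Polynomial F} (h) :
    tauT (m := m) f f' h (AdjoinRoot.root f) = (AdjoinRoot.root f') ^ (m - 1) := by
  rw [tauT]; exact AdjoinRoot.lift_root _

theorem tauT_intertwine {f f' : Polynomial F} (h)
    (hfd : f ∣ (X ^ m - C 1 : Polynomial F)) (hf'd : f' ∣ (X ^ m - C 1 : Polynomial F)) :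
    (projMod _ f' hf'd).comp (conjR F m) = (tauT (m := m) f f' h).comp (projMod _ f hfd) := by
  apply homExt
  · intro x
    simp only [RingHom.coe_comp, Function.comp_apply]
    rw [conjR_of, projMod_of, projMod_of, tauT_of]
  · simp only [RingHom.coe_comp, Function.comp_apply]
    rw [conjR_root, map_pow, projMod_root, projMod_root, tauT_root]

/-- two transfer maps in opposite directions intertwining `conjR` are mutually inverse -/
theorem tau_inv (hm : 0 < m) {f f' : Polynomial F}
    (hfd : f ∣ (X ^ m - C 1 : Polynomial F)) (hf'd : f' ∣ (X ^ m - C 1 : Polynomial F))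
    (τ : AdjoinRoot f →+* AdjoinRoot f') (τ' : AdjoinRoot f' →+* AdjoinRoot f)
    (hτ : (projMod _ f' hf'd).comp (conjR F m) = τ.comp (projMod _ f hfd))
    (hτ' : (projMod _ f hfd).comp (conjR F m) = τ'.comp (projMod _ f' hf'd)) :
    ∀ y, τ' (τ y) = y := by
  intro y
  obtain ⟨u, rfl⟩ := projMod_surjective hfd y
  have h1 : τ (projMod _ f hfd u) = projMod _ f' hf'd (conjR F m u) :=
    (DFunLike.congr_fun hτ u).symm
  rw [h1]
  have h2 : τ' (projMod _ f' hf'd (conjR F m u))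
      = projMod _ f hfd (conjR F m (conjR F m u)) :=
    (DFunLike.congr_fun hτ' (conjR F m u)).symm
  rw [h2, conjR_conjR hm]

theorem inv_unique_comm {S : Type*} [CommMonoid S] {a b c : S}
    (hb : b * a = 1) (hc : c * a = 1) : b = c := by
  calc b = b * (a * c) := by rw [mul_comm a c, hc, mul_one]
    _ = (b * a) * c := by rw [mul_assoc]
    _ = c := by rw [hb, one_mul]

section Galois
variable {F : Type*} [Field F] [Fintype F] {m : ℕ}

theorem root_inv_eq_frob_pow (hm : 0 < m) {g : Polynomial F} (hirr : Irreducible g)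
    (hrev : Associated g.reverse g) (hgd : g ∣ (X ^ m - C 1 : Polynomial F)) :
    (AdjoinRoot.root g) ^ (m - 1)
      = (AdjoinRoot.root g) ^ (Fintype.card F ^ (g.natDegree / 2)) := by
  haveI := Fact.mk hirr
  set K := AdjoinRoot g with hK
  let pb := AdjoinRoot.powerBasis hirr.ne_zero
  letI : Fintype K := Module.fintypeOfFintype pb.basis
  set e := g.natDegree with he'
  have he : 0 < e := hirr.natDegree_pos
  have hcardK : Fintype.card K = Fintype.card F ^ e := by
    rw [Module.card_fintype pb.basis, Fintype.card_fin]
    rfl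
  set q := Fintype.card F with hq'
  have hq1 : 1 < q := Fintype.one_lt_card
  set p := ringChar F with hp'
  haveI : CharP F p := ringChar.charP F
  obtain ⟨s, hp, hqs⟩ := FiniteField.card F p
  have hqps : q = p ^ (s : ℕ) := hq'.trans hqs
  haveI := Fact.mk hp
  haveI : CharP K p := charP_of_injective_algebraMap (algebraMap F K).injective p
  have hΦ : ∀ (n : ℕ) (y : K), iterateFrobenius K p ((s : ℕ) * n) y = y ^ q ^ n := by
    intro n y
    rw [iterateFrobenius_def, hqps, ← pow_mul]
  have frobF : ∀ (n : ℕ) (x : F), x ^ q ^ n = x := fun n x => FiniteField.pow_card_pow n x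
  have hofpow : ∀ (n : ℕ) (x : F),
      iterateFrobenius K p ((s : ℕ) * n) (AdjoinRoot.of g x) = AdjoinRoot.of g x := by
    intro n x
    rw [hΦ, ← map_pow, frobF]
  -- no proper intermediate power of Frobenius fixes the root
  have fixprop : ∀ d : ℕ, 0 < d → d < e →
      (AdjoinRoot.root g) ^ (q ^ d) ≠ AdjoinRoot.root g := by
    intro d hd0 hde hfix
    have hall : ∀ y : K, y ^ q ^ d = y := by
      intro y
      have h2 : iterateFrobenius K p ((s : ℕ) * d) (AdjoinRoot.root g)
          = AdjoinRoot.root g := by rw [hΦ]; exact hfix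
      have hhe := homExt (φ₁ := iterateFrobenius K p ((s : ℕ) * d)) (φ₂ := RingHom.id K)
        (hofpow d) h2
      have := DFunLike.congr_fun hhe y
      rwa [hΦ, RingHom.id_apply] at this
    set P : Polynomial K := X ^ (q ^ d) - X with hP
    have hqd1 : 1 < q ^ d := Nat.one_lt_pow hd0.ne' hq1
    have hPdeg : P.natDegree = q ^ d := by
      rw [hP, natDegree_sub_eq_left_of_natDegree_lt] <;>
        rw [natDegree_X_pow] <;> first | rfl | (rw [natDegree_X]; omega)
    have hP0 : P ≠ 0 := by
      intro h
      rw [h, natDegree_zero] at hPdeg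
      omega
    have hroots : ∀ y : K, y ∈ P.roots := by
      intro y
      rw [Polynomial.mem_roots hP0]
      show P.eval y = 0
      rw [hP]
      simp [hall y]
    have hcount : Fintype.card K ≤ q ^ d := by
      calc Fintype.card K = Finset.univ.card (α := K) := Finset.card_univ.symm
        _ ≤ P.roots.toFinset.card :=
            Finset.card_le_card (fun y _ => Multiset.mem_toFinset.mpr (hroots y))
        _ ≤ Multiset.card P.roots := Multiset.toFinset_card_le _
        _ ≤ P.natDegree := P.card_roots'
        _ = q ^ d := hPdeg
    have hlt : q ^ d < q ^ e := Nat.pow_lt_pow_right hq1 hde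
    rw [hcardK] at hcount
    omega
  set θ := AdjoinRoot.root g with hθ'
  have hθinv : θ ^ (m - 1) * θ = 1 := root_pred_mul hm hgd
  have hθ0 : θ ≠ 0 := by
    intro h
    rw [h, mul_zero] at hθinv
    exact zero_ne_one hθinv
  -- conjugate roots
  set G := g.map (algebraMap F K) with hG
  have hG0 : G ≠ 0 := Polynomial.map_ne_zero hirr.ne_zero
  have hGdeg : G.natDegree = e := Polynomial.natDegree_map _
  have hrootG : ∀ y : K, Polynomial.eval₂ (algebraMap F K) y g = 0 → y ∈ G.roots := by
    intro y hy
    rw [Polynomial.mem_roots hG0]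
    show G.eval y = 0
    rw [hG, Polynomial.eval_map]
    exact hy
  have hθroot : Polynomial.eval₂ (algebraMap F K) θ g = 0 := by
    rw [AdjoinRoot.algebraMap_eq]
    exact AdjoinRoot.eval₂_root g
  have hconj : ∀ k : ℕ, Polynomial.eval₂ (algebraMap F K) (θ ^ q ^ k) g = 0 := by
    intro k
    have h1 : θ ^ q ^ k = iterateFrobenius K p ((s : ℕ) * k) θ := (hΦ k θ).symm
    have h2 : (iterateFrobenius K p ((s : ℕ) * k)).comp (algebraMap F K)
        = algebraMap F K := by
      refine RingHom.ext fun x => ?_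
      rw [RingHom.comp_apply, AdjoinRoot.algebraMap_eq, hΦ, ← map_pow, frobF]
    calc Polynomial.eval₂ (algebraMap F K) (θ ^ q ^ k) g
        = Polynomial.eval₂ ((iterateFrobenius K p ((s : ℕ) * k)).comp (algebraMap F K))
            (iterateFrobenius K p ((s : ℕ) * k) θ) g := by rw [h1, h2]
      _ = iterateFrobenius K p ((s : ℕ) * k) (Polynomial.eval₂ (algebraMap F K) θ g) :=
          (Polynomial.hom_eval₂ _ _ _ _).symm
      _ = 0 := by rw [hθroot, map_zero]
  have hζroot : Polynomial.eval₂ (algebraMap F K) (θ ^ (m - 1)) g = 0 := by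
    rw [AdjoinRoot.algebraMap_eq]
    apply tau_cond_of_rev hm hgd
    -- reverse g vanishes at the root
    obtain ⟨u, hu⟩ := hrev
    obtain ⟨r, hru, hrC⟩ := Polynomial.isUnit_iff.mp u.isUnit
    have h0 : Polynomial.eval₂ (AdjoinRoot.of g) (AdjoinRoot.root g) (g.reverse * ↑u) = 0 := by
      rw [hu]
      exact AdjoinRoot.eval₂_root g
    rw [Polynomial.eval₂_mul, ← hrC, Polynomial.eval₂_C] at h0
    have hrn : AdjoinRoot.of g r ≠ 0 := by
      intro hc
      have : r = 0 := by
        have hinj : Function.Injective (AdjoinRoot.of g) := (AdjoinRoot.of g).injective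
        exact hinj (by rw [hc, map_zero])
      rw [this] at hru
      exact hru.ne_zero rfl
    exact (mul_eq_zero.mp h0).resolve_right hrn
  have hGroots_card : G.roots.toFinset.card ≤ e :=
    le_trans (Multiset.toFinset_card_le _) (le_trans G.card_roots' (le_of_eq hGdeg))
  set T : Finset K := (Finset.range e).image (fun k => θ ^ q ^ k) with hT
  have haux : ∀ k1 k2 : ℕ, k1 < k2 → k2 < e → θ ^ q ^ k1 = θ ^ q ^ k2 → False := by
    intro k1 k2 hlt hk2 hkeq
    set d := k2 - k1 with hd
    have h1 : iterateFrobenius K p ((s : ℕ) * k1) (θ ^ q ^ d)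
        = iterateFrobenius K p ((s : ℕ) * k1) θ := by
      rw [hΦ, hΦ, ← pow_mul θ (q ^ d) (q ^ k1), ← pow_add q d k1]
      rw [show d + k1 = k2 by omega]
      exact hkeq.symm
    have h2 : θ ^ q ^ d = θ := (iterateFrobenius K p ((s : ℕ) * k1)).injective h1
    exact fixprop d (by omega) (by omega) h2
  have hTsub : T ⊆ G.roots.toFinset := by
    intro y hy
    rw [hT, Finset.mem_image] at hy
    obtain ⟨k, _, rfl⟩ := hy
    exact Multiset.mem_toFinset.mpr (hrootG _ (hconj k))
  have hTcard : T.card = e := by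
    rw [hT, Finset.card_image_of_injOn, Finset.card_range]
    intro k1 hk1 k2 hk2 hkeq
    rw [Finset.mem_coe, Finset.mem_range] at hk1 hk2
    rcases lt_trichotomy k1 k2 with h | h | h
    · exact absurd (haux k1 k2 h hk2 hkeq) (fun x => x)
    · exact h
    · exact absurd (haux k2 k1 h hk1 hkeq.symm) (fun x => x)
  have hfinal : T = G.roots.toFinset :=
    Finset.eq_of_subset_of_card_le hTsub (by rw [hTcard]; exact hGroots_card)
  have hζT : θ ^ (m - 1) ∈ T := by
    rw [hfinal]
    exact Multiset.mem_toFinset.mpr (hrootG _ hζroot)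
  rw [hT, Finset.mem_image] at hζT
  obtain ⟨k, hk, hkeq⟩ := hζT
  rw [Finset.mem_range] at hk
  rcases Nat.eq_zero_or_pos k with hk0 | hkpos
  · -- k = 0 : θ² = 1
    subst hk0
    rw [pow_zero, pow_one] at hkeq
    have hθ2 : θ * θ = 1 := by
      have h := hθinv
      rw [← hkeq] at h
      exact h
    rw [← hkeq]
    rcases mul_self_eq_one_iff.mp hθ2 with h1 | h1
    · rw [h1, one_pow]
    · rw [h1]
      by_cases hp2 : p = 2
      · haveI : CharP K 2 := by rw [← hp2]; infer_instance
        have hneg : (-1 : K) = 1 := by rw [CharTwo.neg_eq]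
        rw [hneg, one_pow]
      · have hqodd : Odd (q ^ (e / 2)) := by
          have hoddps : Odd (p ^ (s : ℕ)) := (hp.odd_of_ne_two hp2).pow
          have : Odd q := hqps ▸ hoddps
          exact this.pow
        exact (Odd.neg_one_pow hqodd).symm
  · -- k > 0
    have hk1 : θ ^ q ^ k * θ = 1 := by rw [hkeq]; exact hθinv
    have h2k : θ ^ q ^ (2 * k) = θ := by
      have e1 : (θ ^ q ^ k * θ) ^ q ^ k = 1 := by rw [hk1, one_pow]
      have e2 : θ ^ q ^ (2 * k) * θ ^ q ^ k = 1 := by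
        calc θ ^ q ^ (2 * k) * θ ^ q ^ k
            = (θ ^ q ^ k) ^ q ^ k * θ ^ q ^ k := by
              rw [← pow_mul θ (q ^ k) (q ^ k), ← pow_add q k k, two_mul]
          _ = (θ ^ q ^ k * θ) ^ q ^ k := by rw [mul_pow]
          _ = 1 := e1
      have e3 : θ * θ ^ q ^ k = 1 := by rw [mul_comm]; exact hk1
      exact mul_right_cancel₀ (pow_ne_zero _ hθ0) (e2.trans e3.symm)
    rcases lt_trichotomy (2 * k) e with hlt | heq | hgt
    · exact absurd h2k (fixprop (2 * k) (by omega) hlt)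
    · have hhalf : e / 2 = k := by omega
      rw [← hkeq, hhalf]
    · have hqe : θ ^ q ^ e = θ := by rw [← hcardK]; exact FiniteField.pow_card θ
      have hsplit : θ ^ q ^ (2 * k) = (θ ^ q ^ e) ^ q ^ (2 * k - e) := by
        rw [← pow_mul θ (q ^ e) (q ^ (2 * k - e)), ← pow_add q e (2 * k - e),
          show e + (2 * k - e) = 2 * k by omega]
      rw [hsplit, hqe] at h2k
      exact absurd h2k (fixprop (2 * k - e) (by omega) (by omega))
theorem rev_root_zero' {F : Type*} [Field F] {g : Polynomial F} (hirr : Irreducible g)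
    (hrev : Associated g.reverse g) :
    Polynomial.eval₂ (AdjoinRoot.of g) (AdjoinRoot.root g) g.reverse = 0 := by
  haveI := Fact.mk hirr
  obtain ⟨u, hu⟩ := hrev
  obtain ⟨r, hru, hrC⟩ := Polynomial.isUnit_iff.mp u.isUnit
  have h0 : Polynomial.eval₂ (AdjoinRoot.of g) (AdjoinRoot.root g) (g.reverse * ↑u) = 0 := by
    rw [hu]
    exact AdjoinRoot.eval₂_root g
  rw [Polynomial.eval₂_mul, ← hrC, Polynomial.eval₂_C] at h0
  have hrn : AdjoinRoot.of g r ≠ 0 := by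
    intro hc
    have hinj : Function.Injective (AdjoinRoot.of g) := (AdjoinRoot.of g).injective
    have : r = 0 := hinj (by rw [hc, map_zero])
    rw [this] at hru
    exact hru.ne_zero rfl
  exact (mul_eq_zero.mp h0).resolve_right hrn

theorem tauT_eq_frob (hm : 0 < m) {g : Polynomial F} (hirr : Irreducible g)
    (hrev : Associated g.reverse g) (hgd : g ∣ (X ^ m - C 1 : Polynomial F))
    (hcond : Polynomial.eval₂ (AdjoinRoot.of g) ((AdjoinRoot.root g) ^ (m - 1)) g = 0) :
    ∀ y : AdjoinRoot g, tauT (m := m) g g hcond y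
      = y ^ (Fintype.card F ^ (g.natDegree / 2)) := by
  haveI := Fact.mk hirr
  set p := ringChar F with hp'
  haveI : CharP F p := ringChar.charP F
  obtain ⟨s, hp, hqs⟩ := FiniteField.card F p
  haveI := Fact.mk hp
  haveI : CharP (AdjoinRoot g) p :=
    charP_of_injective_algebraMap (algebraMap F (AdjoinRoot g)).injective p
  set N := (s : ℕ) * (g.natDegree / 2) with hN
  have hΦ : ∀ y : AdjoinRoot g, iterateFrobenius (AdjoinRoot g) p N y
      = y ^ (Fintype.card F ^ (g.natDegree / 2)) := by
    intro y
    rw [iterateFrobenius_def, hN, hqs, ← pow_mul]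
  have key : tauT (m := m) g g hcond = iterateFrobenius (AdjoinRoot g) p N := by
    apply homExt
    · intro x
      rw [tauT_of, hΦ, ← map_pow, FiniteField.pow_card_pow]
    · rw [tauT_root, hΦ]
      exact root_inv_eq_frob_pow hm hirr hrev hgd
  intro y
  rw [key, hΦ]

end Galois

end QCAux

open QCAux

theorem stmt15 (F : Type*) [Field F] [Fintype F] (m ℓ n p : ℕ) (hm : 0 < m)
    -- gcd(m, q) = 1
    (hmq : (m : F) ≠ 0)
    -- the factorization x^m − 1 = g₁⋯g_n · h₁h₁*⋯h_p h_p* with g_i self-reciprocal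
    -- irreducible and h_t, h_t* = reverse(h_t) a reciprocal pair of irreducibles
    (g : Fin n → Polynomial F) (h : Fin p → Polynomial F)
    (hgirr : ∀ i, Irreducible (g i)) (hhirr : ∀ t, Irreducible (h t))
    (hgself : ∀ i, Associated ((g i).reverse) (g i))
    (hhnotself : ∀ t, ¬ Associated ((h t).reverse) (h t))
    (hfact : Associated ((∏ i, g i) * ∏ t, h t * (h t).reverse) (X ^ m - C 1))
    (hgd : ∀ i, g i ∣ X ^ m - C 1) (hhd : ∀ t, h t ∣ X ^ m - C 1)
    (hh'd : ∀ t, (h t).reverse ∣ X ^ m - C 1)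
    -- the canonical identification H''_t = H'_t (both are F(ξ^{a_t}) = F(ξ^{−a_t})),
    -- fixing F and sending the root of h_t* to the inverse of the root of h_t
    (σ : ∀ t, AdjoinRoot ((h t).reverse) ≃+* AdjoinRoot (h t))
    (hσF : ∀ t (x : F), σ t (AdjoinRoot.of _ x) = AdjoinRoot.of _ x)
    (hσroot : ∀ t, σ t (AdjoinRoot.root ((h t).reverse)) * AdjoinRoot.root (h t) = 1)
    -- C a QC code of index ℓ
    (Cs : Submodule (AdjoinRoot (X ^ m - C 1 : Polynomial F))
      (Fin ℓ → AdjoinRoot (X ^ m - C 1 : Polynomial F))) :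
    -- the g_i-constituent of C^⊥ is the Hermitian dual of C_i (with conjugation
    -- x ↦ x^(q^(deg g_i / 2)); for deg g_i = 1 this is the Euclidean dual)
    (∀ i, constSet (g i) (hgd i) (dualArr Cs) =
      {d : Fin ℓ → AdjoinRoot (g i) | ∀ cc ∈ constSet (g i) (hgd i) (arrSet Cs),
        ∑ j, cc j * d j ^ (Fintype.card F ^ ((g i).natDegree / 2)) = 0}) ∧
    -- the h_t-constituent of C^⊥ is the Euclidean dual of C''_t
    (∀ t, constSet (h t) (hhd t) (dualArr Cs) =
      {d : Fin ℓ → AdjoinRoot (h t) |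
        ∀ cc ∈ constSet ((h t).reverse) (hh'd t) (arrSet Cs),
          ∑ j, σ t (cc j) * d j = 0}) ∧
    -- the h_t*-constituent of C^⊥ is the Euclidean dual of C'_t
    (∀ t, constSet ((h t).reverse) (hh'd t) (dualArr Cs) =
      {d : Fin ℓ → AdjoinRoot ((h t).reverse) |
        ∀ cc ∈ constSet (h t) (hhd t) (arrSet Cs),
          ∑ j, cc j * σ t (d j) = 0}) := by
  
  classical
  have hsq : Squarefree (X ^ m - C 1 : Polynomial F) :=
    (Polynomial.separable_X_pow_sub_C (1 : F) hmq one_ne_zero).squarefree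
  set W : Fin n ⊕ (Fin p ⊕ Fin p) → Polynomial F :=
    Sum.elim g (Sum.elim h (fun t => (h t).reverse)) with hW
  have hWd : ∀ b, W b ∣ (X ^ m - C 1 : Polynomial F) := by
    rintro (i | t | t)
    · exact hgd i
    · exact hhd t
    · exact hh'd t
  have hprodeq : (∏ b, W b) = (∏ i, g i) * ∏ t, h t * (h t).reverse := by
    rw [hW, Fintype.prod_sum_type]
    congr 1
    rw [Fintype.prod_sum_type, ← Finset.prod_mul_distrib]
    rfl
  have hprod : Associated (∏ b, W b) (X ^ m - C 1 : Polynomial F) := by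
    rw [hprodeq]; exact hfact
  have hXndvd : ¬ ((X : Polynomial F) ∣ X ^ m - C 1) := by
    rw [Polynomial.X_dvd_iff]
    have : (X ^ m - C 1 : Polynomial F).coeff 0 = -1 := by
      rw [Polynomial.coeff_sub, Polynomial.coeff_X_pow, Polynomial.coeff_C]
      simp [hm.ne']
      omega
    rw [this]
    exact neg_ne_zero.mpr one_ne_zero
  have hcoeff0 : ∀ t, (h t).coeff 0 ≠ 0 := fun t hc =>
    hXndvd ((Polynomial.X_dvd_iff.mpr hc).trans (hhd t))
  have hrevdeg : ∀ t, ((h t).reverse).natDegree = (h t).natDegree := by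
    intro t
    rw [Polynomial.reverse_natDegree,
      Polynomial.natTrailingDegree_eq_zero.mpr (Or.inr (hcoeff0 t)), Nat.sub_zero]
  have hWnu : ∀ b, ¬ IsUnit (W b) := by
    rintro (i | t | t)
    · exact Polynomial.not_isUnit_of_natDegree_pos _ (hgirr i).natDegree_pos
    · exact Polynomial.not_isUnit_of_natDegree_pos _ (hhirr t).natDegree_pos
    · refine Polynomial.not_isUnit_of_natDegree_pos _ ?_
      show 0 < ((h t).reverse).natDegree
      rw [hrevdeg t]
      exact (hhirr t).natDegree_pos
  have hunit : ∀ b (u : AdjoinRoot (W b)), u ≠ 0 → IsUnit u := by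
    rintro (i | t | t)
    · show ∀ u : AdjoinRoot (g i), u ≠ 0 → IsUnit u
      intro u hu
      haveI : Fact (Irreducible (g i)) := Fact.mk (hgirr i)
      exact IsUnit.mk0 u hu
    · show ∀ u : AdjoinRoot (h t), u ≠ 0 → IsUnit u
      intro u hu
      haveI : Fact (Irreducible (h t)) := Fact.mk (hhirr t)
      exact IsUnit.mk0 u hu
    · show ∀ u : AdjoinRoot ((h t).reverse), u ≠ 0 → IsUnit u
      intro u hu
      haveI : Fact (Irreducible (h t)) := Fact.mk (hhirr t)
      have h1 : σ t u ≠ 0 := fun hc => hu (by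
        have h2 := congrArg (σ t).symm hc
        rwa [RingEquiv.symm_apply_apply, map_zero] at h2)
      have h3 := (IsUnit.mk0 _ h1).map (σ t).symm
      rwa [RingEquiv.symm_apply_apply] at h3
  have condg : ∀ i, Polynomial.eval₂ (AdjoinRoot.of (g i))
      ((AdjoinRoot.root (g i)) ^ (m - 1)) (g i) = 0 := fun i =>
    tau_cond_of_rev hm (hgd i) (rev_root_zero' (hgirr i) (hgself i))
  have condh : ∀ t, Polynomial.eval₂ (AdjoinRoot.of ((h t).reverse))
      ((AdjoinRoot.root ((h t).reverse)) ^ (m - 1)) (h t) = 0 := fun t =>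
    tau_cond_of_rev hm (hh'd t) (AdjoinRoot.eval₂_root _)
  have condh' : ∀ t, Polynomial.eval₂ (AdjoinRoot.of (h t))
      ((AdjoinRoot.root (h t)) ^ (m - 1)) ((h t).reverse) = 0 := fun t =>
    tau_cond_rev hm (hhd t)
  have hσint : ∀ t, (projMod _ (h t) (hhd t)).comp (conjR F m)
      = ((σ t).toRingHom).comp (projMod _ ((h t).reverse) (hh'd t)) := by
    intro t
    apply homExt
    · intro x
      simp only [RingHom.coe_comp, Function.comp_apply, RingEquiv.coe_toRingHom]
      rw [conjR_of, projMod_of, projMod_of]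
      exact (hσF t x).symm
    · simp only [RingHom.coe_comp, Function.comp_apply, RingEquiv.coe_toRingHom]
      rw [conjR_root, map_pow, projMod_root, projMod_root]
      exact inv_unique_comm (root_pred_mul hm (hhd t)) (hσroot t)
  refine ⟨?_, ?_, ?_⟩
  · -- g-constituents
    intro i
    have hmaster := master hm hsq Cs W hWd hprod hWnu hunit (Sum.inl i) (Sum.inl i)
      (tauT (g i) (g i) (condg i)) (tauT (g i) (g i) (condg i))
      (tauT_intertwine (condg i) (hgd i) (hgd i))
      (tauT_intertwine (condg i) (hgd i) (hgd i))
      (by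
        rintro (i' | t | t) hb0 hb1
        · exact ⟨Sum.inl i', tauT (g i') (g i') (condg i'), hb0,
            tauT_intertwine (condg i') (hgd i') (hgd i')⟩
        · exact ⟨Sum.inr (Sum.inr t), tauT ((h t).reverse) (h t) (condh' t), by simp,
            tauT_intertwine (condh' t) (hh'd t) (hhd t)⟩
        · exact ⟨Sum.inr (Sum.inl t), tauT (h t) ((h t).reverse) (condh t), by simp,
            tauT_intertwine (condh t) (hhd t) (hh'd t)⟩)
    refine hmaster.trans ?_
    show {d' : Fin ℓ → AdjoinRoot (g i) |
        ∀ cc ∈ constSet (g i) (hgd i) (arrSet Cs),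
          ∑ j, tauT (g i) (g i) (condg i) (cc j) * d' j = 0} = _
    have hfrob := tauT_eq_frob hm (hgirr i) (hgself i) (hgd i) (condg i)
    have hinv := tau_inv hm (hgd i) (hgd i) (tauT (g i) (g i) (condg i))
      (tauT (g i) (g i) (condg i))
      (tauT_intertwine (condg i) (hgd i) (hgd i))
      (tauT_intertwine (condg i) (hgd i) (hgd i))
    ext d'
    simp only [Set.mem_setOf_eq]
    constructor
    · intro hcnd cc hcc
      have h1 := congrArg (tauT (g i) (g i) (condg i)) (hcnd cc hcc)
      rw [map_sum, map_zero] at h1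
      have e2 : ∀ j, (tauT (g i) (g i) (condg i))
          ((tauT (g i) (g i) (condg i)) (cc j) * d' j)
          = cc j * d' j ^ (Fintype.card F ^ ((g i).natDegree / 2)) := by
        intro j
        rw [map_mul, hinv (cc j), hfrob (d' j)]
      rw [← h1]
      exact Finset.sum_congr rfl fun j _ => (e2 j).symm
    · intro hcnd cc hcc
      have h1 := congrArg (tauT (g i) (g i) (condg i)) (hcnd cc hcc)
      rw [map_sum, map_zero] at h1
      have e2 : ∀ j, (tauT (g i) (g i) (condg i))
          (cc j * d' j ^ (Fintype.card F ^ ((g i).natDegree / 2)))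
          = (tauT (g i) (g i) (condg i)) (cc j) * d' j := by
        intro j
        rw [map_mul, ← hfrob (d' j), hinv (d' j)]
      rw [← h1]
      exact Finset.sum_congr rfl fun j _ => (e2 j).symm
  · -- h-constituents
    intro t
    have hmaster := master hm hsq Cs W hWd hprod hWnu hunit
      (Sum.inr (Sum.inl t)) (Sum.inr (Sum.inr t))
      ((σ t).toRingHom) (tauT (h t) ((h t).reverse) (condh t))
      (hσint t) (tauT_intertwine (condh t) (hhd t) (hh'd t))
      (by
        rintro (i | s | s) hb0 hb1
        · exact ⟨Sum.inl i, tauT (g i) (g i) (condg i), by simp,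
            tauT_intertwine (condg i) (hgd i) (hgd i)⟩
        · have hst : s ≠ t := fun hc => hb0 (by rw [hc])
          exact ⟨Sum.inr (Sum.inr s), tauT ((h s).reverse) (h s) (condh' s), by simp,
            tauT_intertwine (condh' s) (hh'd s) (hhd s)⟩
        · have hst : s ≠ t := fun hc => hb1 (by rw [hc])
          exact ⟨Sum.inr (Sum.inl s), tauT (h s) ((h s).reverse) (condh s),
            by simpa using hst, tauT_intertwine (condh s) (hhd s) (hh'd s)⟩)
    exact hmaster
  · -- h*-constituents
    intro t
    have hmaster := master hm hsq Cs W hWd hprod hWnu hunit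
      (Sum.inr (Sum.inr t)) (Sum.inr (Sum.inl t))
      (tauT (h t) ((h t).reverse) (condh t)) ((σ t).toRingHom)
      (tauT_intertwine (condh t) (hhd t) (hh'd t)) (hσint t)
      (by
        rintro (i | s | s) hb0 hb1
        · exact ⟨Sum.inl i, tauT (g i) (g i) (condg i), by simp,
            tauT_intertwine (condg i) (hgd i) (hgd i)⟩
        · have hst : s ≠ t := fun hc => hb1 (by rw [hc])
          exact ⟨Sum.inr (Sum.inr s), tauT ((h s).reverse) (h s) (condh' s),
            by simpa using hst, tauT_intertwine (condh' s) (hh'd s) (hhd s)⟩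
        · have hst : s ≠ t := fun hc => hb0 (by rw [hc])
          exact ⟨Sum.inr (Sum.inl s), tauT (h s) ((h s).reverse) (condh s), by simp,
            tauT_intertwine (condh s) (hhd s) (hh'd s)⟩)
    refine hmaster.trans ?_
    show {d' : Fin ℓ → AdjoinRoot ((h t).reverse) |
        ∀ cc ∈ constSet (h t) (hhd t) (arrSet Cs),
          ∑ j, tauT (h t) ((h t).reverse) (condh t) (cc j) * d' j = 0} = _
    have hστ := tau_inv hm (hhd t) (hh'd t) (tauT (h t) ((h t).reverse) (condh t))
      ((σ t).toRingHom) (tauT_intertwine (condh t) (hhd t) (hh'd t)) (hσint t)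
    have hτσ := tau_inv hm (hh'd t) (hhd t) ((σ t).toRingHom)
      (tauT (h t) ((h t).reverse) (condh t)) (hσint t)
      (tauT_intertwine (condh t) (hhd t) (hh'd t))
    ext d'
    simp only [Set.mem_setOf_eq]
    constructor
    · intro hcnd cc hcc
      have h1 := congrArg (σ t) (hcnd cc hcc)
      rw [map_sum, map_zero] at h1
      rw [← h1]
      refine Finset.sum_congr rfl fun j _ => ?_
      rw [map_mul]
      congr 1
      exact (hστ (cc j)).symm
    · intro hcnd cc hcc
      have h1 := congrArg (tauT (h t) ((h t).reverse) (condh t)) (hcnd cc hcc)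
      rw [map_sum, map_zero] at h1
      rw [← h1]
      refine Finset.sum_congr rfl fun j _ => ?_
      rw [map_mul]
      congr 1
      exact (hτσ (d' j)).symm
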